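/- Let S be a finite type with card S ≥ 2, p a probability mass function on S, δ ∈ (0,1), and let X₁, …, X_n (n ≥ 1) be i.i.d. S-valued random variables on a probability space (Ω, ℱ, ℙ) each with law p, with empirical distribution p̂(s) := (1/n) · #{i ∈ {1,…,n} : X_i = s}. Set ε := sqrt(2 · (ln(2^{card S} − 2) − ln δ) / n). Then ℙ(∑_{s∈S} |p̂(s) − p(s)| ≥ ε) ≤ δ. Equivalently, for any β > 0, if n ≥ (2/β²) · ln((2^{card S} − 2)/δ) then ℙ(∑_{s∈S} |p̂(s) − p(s)| ≥ β) ≤ δ. -/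

import Mathlib

open Finset MeasureTheory ProbabilityTheory

section HoeffdingAux
open Real

lemma bern_mgf_le (m : ℝ) (hm0 : 0 ≤ m) (hm1 : m ≤ 1) (t : ℝ) :
    exp (-(t * m)) * (1 - m + m * exp t) ≤ exp (t ^ 2 / 8) := by
  set g : ℝ → ℝ := fun x => 1 - m + m * exp x with hgdef
  have hgpos : ∀ x, 0 < g x := by
    intro x
    rcases eq_or_lt_of_le hm0 with h | h
    · simp [hgdef, ← h]
    · have h1 : 0 < m * exp x := mul_pos h (exp_pos x)
      have : (0:ℝ) ≤ 1 - m := by linarith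
      simp only [hgdef]; linarith
  set h : ℝ → ℝ := fun x => log (g x) - x * m - x ^ 2 / 8 with hhdef
  set h1 : ℝ → ℝ := fun x => m * exp x / g x - m - x / 4 with hh1def
  have hg' : ∀ x, HasDerivAt g (m * exp x) x := by
    intro x
    exact ((Real.hasDerivAt_exp x).const_mul m).const_add (1 - m)
  have hd : ∀ x, HasDerivAt h (h1 x) x := by
    intro x
    have hlog : HasDerivAt (fun y => log (g y)) (m * exp x / g x) x := by
      simpa [div_eq_mul_inv] using (hg' x).log (hgpos x).ne'
    have hid : HasDerivAt (fun y : ℝ => y * m) m x := by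
      simpa using (hasDerivAt_id x).mul_const m
    have hsq : HasDerivAt (fun y : ℝ => y ^ 2 / 8) (x / 4) x := by
      have := (hasDerivAt_pow 2 x).div_const 8
      refine this.congr_deriv ?_
      norm_num
      ring
    simpa [hhdef, hh1def, Pi.sub_def] using (hlog.sub hid).sub hsq
  have hd1 : ∀ x, HasDerivAt h1
      ((m * exp x * g x - m * exp x * (m * exp x)) / (g x) ^ 2 - 1 / 4) x := by
    intro x
    have hdiv : HasDerivAt (fun y => m * exp y / g y)
        ((m * exp x * g x - m * exp x * (m * exp x)) / (g x) ^ 2) x :=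
      ((Real.hasDerivAt_exp x).const_mul m).div (hg' x) (hgpos x).ne'
    have hlin : HasDerivAt (fun y : ℝ => m + y / 4) (1 / 4) x := by
      simpa using ((hasDerivAt_id x).div_const 4).const_add m
    have := hdiv.sub hlin
    simpa [hh1def, sub_sub, Pi.sub_def] using this
  have hd1le : ∀ x, (m * exp x * g x - m * exp x * (m * exp x)) / (g x) ^ 2 - 1 / 4 ≤ 0 := by
    intro x
    have hg2 : 0 < (g x) ^ 2 := pow_pos (hgpos x) 2
    rw [sub_nonpos, div_le_iff₀ hg2]
    have ha : 0 ≤ m * exp x := mul_nonneg hm0 (exp_pos x).le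
    have hb : (0:ℝ) ≤ 1 - m := by linarith
    simp only [hgdef]
    nlinarith [sq_nonneg (m * exp x - (1 - m))]
  have h1anti : Antitone h1 := by
    apply antitone_of_deriv_nonpos
    · intro x; exact (hd1 x).differentiableAt
    · intro x; rw [(hd1 x).deriv]; exact hd1le x
  have h10 : h1 0 = 0 := by
    have : g 0 = 1 := by simp [hgdef]
    simp [hh1def, this]
  have hle : ∀ x, h x ≤ 0 := by
    have h0 : h 0 = 0 := by
      have : g 0 = 1 := by simp [hgdef]
      simp [hhdef, this]
    intro x
    rcases le_total 0 x with hx | hx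
    · have : AntitoneOn h (Set.Ici 0) := by
        apply antitoneOn_of_deriv_nonpos (convex_Ici 0)
        · exact Continuous.continuousOn (by
            have : Differentiable ℝ h := fun y => (hd y).differentiableAt
            exact this.continuous)
        · intro y _; exact (hd y).differentiableAt.differentiableWithinAt
        · intro y hy
          rw [(hd y).deriv]
          have : (0:ℝ) ≤ y := le_of_lt (by simpa using hy)
          calc h1 y ≤ h1 0 := h1anti this
            _ = 0 := h10
      calc h x ≤ h 0 := this (Set.self_mem_Ici) (Set.mem_Ici.mpr hx) hx
        _ = 0 := h0
    · have : MonotoneOn h (Set.Iic 0) := by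
        apply monotoneOn_of_deriv_nonneg (convex_Iic 0)
        · exact Continuous.continuousOn (by
            have : Differentiable ℝ h := fun y => (hd y).differentiableAt
            exact this.continuous)
        · intro y _; exact (hd y).differentiableAt.differentiableWithinAt
        · intro y hy
          rw [(hd y).deriv]
          have hy0 : y ≤ 0 := le_of_lt (by simpa using hy)
          have := h1anti hy0
          rw [h10] at this
          linarith
      calc h x ≤ h 0 := this (Set.mem_Iic.mpr hx) Set.self_mem_Iic hx
        _ = 0 := h0
  have key := hle t
  have : log (g t) ≤ t * m + t ^ 2 / 8 := by simp only [hhdef] at key; linarith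
  have hgt : g t ≤ exp (t * m + t ^ 2 / 8) := by
    calc g t = exp (log (g t)) := (exp_log (hgpos t)).symm
      _ ≤ exp (t * m + t ^ 2 / 8) := exp_le_exp.mpr this
  calc exp (-(t * m)) * (1 - m + m * exp t) = exp (-(t * m)) * g t := by simp [hgdef]
    _ ≤ exp (-(t * m)) * exp (t * m + t ^ 2 / 8) := by
        exact mul_le_mul_of_nonneg_left hgt (exp_pos _).le
    _ = exp (t ^ 2 / 8) := by rw [← exp_add]; ring_nf

end HoeffdingAux

lemma per_set_bound
    {S : Type*} [Fintype S] [DecidableEq S] [MeasurableSpace S] [MeasurableSingletonClass S]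
    {Ω : Type*} [MeasurableSpace Ω] (μ : Measure Ω) [IsProbabilityMeasure μ]
    (p : S → ℝ) (hp0 : ∀ s, 0 ≤ p s) (hp1 : ∑ s, p s = 1)
    (n : ℕ) (X : Fin n → Ω → S)
    (hmeas : ∀ i, Measurable (X i))
    (hindep : iIndepFun X μ)
    (hlaw : ∀ i s, (μ (X i ⁻¹' {s})).toReal = p s)
    (A : Finset S) (β : ℝ) (hβ : 0 ≤ β) :
    (μ {ω | (n : ℝ) * β / 2 ≤
        ∑ i, ((if X i ω ∈ A then (1:ℝ) else 0) - ∑ s ∈ A, p s)}).toReal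
      ≤ Real.exp (-((n : ℝ) * β ^ 2 / 2)) := by
  set m : ℝ := ∑ s ∈ A, p s with hmdef
  have hm0 : 0 ≤ m := Finset.sum_nonneg fun s _ => hp0 s
  have hm1 : m ≤ 1 := by
    rw [← hp1]
    exact Finset.sum_le_sum_of_subset_of_nonneg (Finset.subset_univ A) fun s _ _ => hp0 s
  set f : S → ℝ := fun s => (if s ∈ A then (1:ℝ) else 0) - m with hfdef
  set W : Fin n → Ω → ℝ := fun i ω => f (X i ω) with hWdef
  have hWmeas : ∀ i, Measurable (W i) := fun i => (measurable_of_finite f).comp (hmeas i)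
  have hWindep : iIndepFun W μ :=
    hindep.comp (fun _ => f) (fun _ => measurable_of_finite f)
  have hAmeas : ∀ i, MeasurableSet (X i ⁻¹' ↑A) :=
    fun i => (hmeas i) ((A : Set S).toFinite.measurableSet)
  have hμA : ∀ i, (μ (X i ⁻¹' ↑A)).toReal = m := by
    intro i
    have hU : X i ⁻¹' ↑A = ⋃ s ∈ A, X i ⁻¹' {s} := by
      ext ω; simp
    rw [hU, measure_biUnion_finset]
    · rw [ENNReal.toReal_sum fun s _ => measure_ne_top μ _]
      exact Finset.sum_congr rfl fun s _ => hlaw i s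
    · intro s _ r _ hsr
      refine Set.disjoint_left.mpr fun ω hs hr => hsr ?_
      simp only [Set.mem_preimage, Set.mem_singleton_iff] at hs hr
      rw [← hs, ← hr]
    · exact fun s _ => (hmeas i) (measurableSet_singleton s)
  have hWbd : ∀ i ω, W i ω ≤ 1 := by
    intro i ω
    simp only [hWdef, hfdef]
    split <;> linarith
  have hmgf : ∀ (i : Fin n) (t : ℝ),
      mgf (W i) μ t = Real.exp (-(t * m)) * (1 - m + m * Real.exp t) := by
    intro i t
    have hZeq : ∀ ω, Real.exp (t * W i ω) =
        Real.exp (-(t * m)) * (1 + (Real.exp t - 1) *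
          (X i ⁻¹' ↑A).indicator (fun _ => (1:ℝ)) ω) := by
      intro ω
      by_cases h : X i ω ∈ A
      · rw [Set.indicator_of_mem (by simpa using h)]
        simp only [hWdef, hfdef, if_pos h]
        rw [show t * (1 - m) = -(t * m) + t by ring, Real.exp_add]; ring
      · rw [Set.indicator_of_notMem (by simpa using h)]
        simp only [hWdef, hfdef, if_neg h]
        rw [show t * ((0:ℝ) - m) = -(t * m) by ring]; ring
    have hZint : Integrable ((X i ⁻¹' ↑A).indicator (fun _ => (1:ℝ))) μ :=
      (integrable_const (1:ℝ)).indicator (hAmeas i)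
    rw [mgf]
    calc ∫ ω, Real.exp (t * W i ω) ∂μ
        = ∫ ω, Real.exp (-(t * m)) * (1 + (Real.exp t - 1) *
            (X i ⁻¹' ↑A).indicator (fun _ => (1:ℝ)) ω) ∂μ := by
          exact integral_congr_ae (Filter.Eventually.of_forall hZeq)
      _ = Real.exp (-(t * m)) * ∫ ω, (1 + (Real.exp t - 1) *
            (X i ⁻¹' ↑A).indicator (fun _ => (1:ℝ)) ω) ∂μ := integral_const_mul _ _
      _ = Real.exp (-(t * m)) * (1 + (Real.exp t - 1) * m) := by
          rw [integral_add (integrable_const 1) (hZint.const_mul _),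
            integral_const_mul, integral_indicator_const (1:ℝ) (hAmeas i)]
          simp [Measure.real, hμA i]
      _ = Real.exp (-(t * m)) * (1 - m + m * Real.exp t) := by ring
  -- Chernoff
  set t : ℝ := 2 * β with htdef
  have ht : 0 ≤ t := by positivity
  have hsum_meas : Measurable (fun ω => ∑ i, W i ω) :=
    Finset.measurable_sum Finset.univ fun i _ => hWmeas i
  have hsum_eq : (∑ i, W i) = fun ω => ∑ i, W i ω := by
    funext ω; exact Finset.sum_apply ω Finset.univ W
  have h_int : Integrable (fun ω => Real.exp (t * (∑ i, W i) ω)) μ := by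
    refine Integrable.mono' (integrable_const (Real.exp (t * n)))
      ((hsum_meas.const_mul t).exp.aestronglyMeasurable.congr ?_)
      (Filter.Eventually.of_forall fun ω => ?_)
    · exact Filter.Eventually.of_forall fun ω => by rw [hsum_eq]
    · rw [Real.norm_eq_abs, abs_of_pos (Real.exp_pos _), Real.exp_le_exp, hsum_eq]
      refine mul_le_mul_of_nonneg_left ?_ ht
      calc ∑ i, W i ω ≤ ∑ _i : Fin n, (1:ℝ) :=
            Finset.sum_le_sum fun i _ => hWbd i ω
        _ = n := by simp
  have hchern := measure_ge_le_exp_mul_mgf (μ := μ) (X := ∑ i, W i)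
    ((n : ℝ) * β / 2) ht h_int
  have hset : {ω | (n : ℝ) * β / 2 ≤ (∑ i, W i) ω} =
      {ω | (n : ℝ) * β / 2 ≤ ∑ i, ((if X i ω ∈ A then (1:ℝ) else 0) - ∑ s ∈ A, p s)} := by
    ext ω
    simp only [Set.mem_setOf_eq, hsum_eq, hWdef, hfdef, hmdef, Finset.sum_apply]
  rw [hset] at hchern
  refine hchern.trans ?_
  have hmgfsum : mgf (∑ i, W i) μ t = ∏ i, mgf (W i) μ t :=
    hWindep.mgf_sum hWmeas Finset.univ
  rw [hmgfsum]
  have hprod : ∏ i, mgf (W i) μ t ≤ (Real.exp (t ^ 2 / 8)) ^ n := by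
    calc ∏ i, mgf (W i) μ t ≤ ∏ _i : Fin n, Real.exp (t ^ 2 / 8) := by
          refine Finset.prod_le_prod (fun i _ => mgf_nonneg) fun i _ => ?_
          rw [hmgf i t]
          exact bern_mgf_le m hm0 hm1 t
      _ = (Real.exp (t ^ 2 / 8)) ^ n := by simp
  calc Real.exp (-t * ((n : ℝ) * β / 2)) * ∏ i, mgf (W i) μ t
      ≤ Real.exp (-t * ((n : ℝ) * β / 2)) * (Real.exp (t ^ 2 / 8)) ^ n :=
        mul_le_mul_of_nonneg_left hprod (Real.exp_pos _).le
    _ = Real.exp (-((n : ℝ) * β ^ 2 / 2)) := by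
        rw [← Real.exp_nat_mul, ← Real.exp_add, htdef]
        congr 1
        ring

theorem l1_confidence_interval
    {S : Type*} [Fintype S] [DecidableEq S] [MeasurableSpace S] [MeasurableSingletonClass S]
    (hS : 2 ≤ Fintype.card S)
    {Ω : Type*} [MeasurableSpace Ω] (μ : Measure Ω) [IsProbabilityMeasure μ]
    (p : S → ℝ) (hp0 : ∀ s, 0 ≤ p s) (hp1 : ∑ s, p s = 1)
    (δ : ℝ) (hδ0 : 0 < δ) (hδ1 : δ < 1)
    (n : ℕ) (hn : 1 ≤ n) (X : Fin n → Ω → S)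
    (hmeas : ∀ i, Measurable (X i))
    (hindep : iIndepFun X μ)
    (hlaw : ∀ i s, (μ (X i ⁻¹' {s})).toReal = p s) :
    ((μ {ω | Real.sqrt (2 * (Real.log ((2 : ℝ) ^ Fintype.card S - 2) - Real.log δ) / n) ≤
        ∑ s, |(n : ℝ)⁻¹ * (Finset.univ.filter (fun i => X i ω = s)).card - p s|}).toReal ≤ δ)
      ∧
    (∀ β : ℝ, 0 < β → (n : ℝ) ≥ 2 / β ^ 2 * Real.log (((2 : ℝ) ^ Fintype.card S - 2) / δ) →
      (μ {ω | β ≤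
        ∑ s, |(n : ℝ)⁻¹ * (Finset.univ.filter (fun i => X i ω = s)).card - p s|}).toReal ≤ δ) := by
  have hnR : (0:ℝ) < n := by exact_mod_cast Nat.lt_of_lt_of_le Nat.zero_lt_one hn
  set C : ℝ := (2 : ℝ) ^ Fintype.card S - 2 with hCdef
  have hC2 : (2:ℝ) ≤ C := by
    have : (2:ℝ) ^ 2 ≤ (2:ℝ) ^ Fintype.card S := pow_le_pow_right₀ one_le_two hS
    simp only [hCdef]; nlinarith
  have hC0 : (0:ℝ) < C := by linarith
  have hSne : Nonempty S := Fintype.card_pos_iff.mp (by omega)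
  -- the family of bad sets
  set 𝒜 : Finset (Finset S) :=
    Finset.univ.filter (fun A : Finset S => A ≠ ∅ ∧ A ≠ Finset.univ) with h𝒜def
  have hcard𝒜 : (𝒜.card : ℝ) = C := by
    have hne : (∅ : Finset S) ≠ Finset.univ := by
      intro h
      have := Finset.univ_nonempty (α := S)
      rw [← h] at this
      exact Finset.not_nonempty_empty this
    have hneg : (Finset.univ.filter
        (fun a => ¬(fun A : Finset S => A ≠ ∅ ∧ A ≠ Finset.univ) a)).card = 2 := by
      have heq : Finset.univ.filter (fun A : Finset S => ¬(A ≠ ∅ ∧ A ≠ Finset.univ)) =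
          {∅, Finset.univ} := by
        ext A
        simp [not_and_or, or_iff_not_imp_left, Decidable.not_not]
      rw [heq, Finset.card_insert_of_notMem (by simpa using hne), Finset.card_singleton]
    have htot := Finset.card_filter_add_card_filter_not
      (s := (Finset.univ : Finset (Finset S)))
      (p := fun A : Finset S => A ≠ ∅ ∧ A ≠ Finset.univ)
    have hunivcard : (Finset.univ : Finset (Finset S)).card = 2 ^ Fintype.card S := by
      rw [Finset.card_univ, Fintype.card_finset]
    have h2le : 2 ≤ 2 ^ Fintype.card S := by
      calc 2 ≤ 2 ^ 1 := by norm_num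
        _ ≤ 2 ^ Fintype.card S := Nat.pow_le_pow_right (by norm_num) (by omega)
    rw [hneg, hunivcard, ← h𝒜def] at htot
    have : 𝒜.card = 2 ^ Fintype.card S - 2 := by omega
    rw [this, hCdef]
    push_cast [h2le]
    ring
  -- master bound
  have master : ∀ β : ℝ, 0 < β →
      (μ {ω | β ≤ ∑ s, |(n : ℝ)⁻¹ * (Finset.univ.filter (fun i => X i ω = s)).card
          - p s|}).toReal ≤ C * Real.exp (-((n : ℝ) * β ^ 2 / 2)) := by
    intro β hβ
    set E : Finset S → Set Ω := fun A =>
      {ω | (n : ℝ) * β / 2 ≤ ∑ i, ((if X i ω ∈ A then (1:ℝ) else 0) - ∑ s ∈ A, p s)}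
      with hEdef
    -- counting identity
    have hcount : ∀ (ω : Ω) (A : Finset S),
        ∑ s ∈ A, ((Finset.univ.filter (fun i => X i ω = s)).card : ℝ)
          = ∑ i, (if X i ω ∈ A then (1:ℝ) else 0) := by
      intro ω A
      have : ∀ s ∈ A, ((Finset.univ.filter (fun i => X i ω = s)).card : ℝ)
          = ∑ i, (if X i ω = s then (1:ℝ) else 0) := by
        intro s _
        rw [Finset.sum_boole]
      rw [Finset.sum_congr rfl this, Finset.sum_comm]
      refine Finset.sum_congr rfl fun i _ => ?_
      rw [Finset.sum_ite_eq A (X i ω) (fun _ => (1:ℝ))]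
    -- inclusion into union
    have hsub : {ω | β ≤ ∑ s, |(n : ℝ)⁻¹ * (Finset.univ.filter (fun i => X i ω = s)).card
        - p s|} ⊆ ⋃ A ∈ 𝒜, E A := by
      intro ω hω
      simp only [Set.mem_setOf_eq] at hω
      set q : S → ℝ := fun s =>
        (n : ℝ)⁻¹ * ((Finset.univ.filter (fun i => X i ω = s)).card : ℝ) with hqdef
      set A : Finset S := Finset.univ.filter (fun s => p s < q s) with hAdef
      have hq1 : ∑ s, q s = 1 := by
        simp only [hqdef]
        rw [← Finset.mul_sum, hcount ω Finset.univ]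
        simp [hnR.ne']
      have hqsum : ∀ B : Finset S, ∑ s ∈ B, q s
          = (n:ℝ)⁻¹ * ∑ i, (if X i ω ∈ B then (1:ℝ) else 0) := by
        intro B
        simp only [hqdef]
        rw [← Finset.mul_sum, hcount ω B]
      set D : ℝ := ∑ s ∈ A, (q s - p s) with hDdef
      have hzero : D + ∑ s ∈ Finset.univ.filter (fun s => ¬ p s < q s), (q s - p s) = 0 := by
        rw [hDdef, Finset.sum_filter_add_sum_filter_not]
        rw [Finset.sum_sub_distrib, hq1, hp1]
        ring
      have habs : ∑ s, |q s - p s| = 2 * D := by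
        rw [← Finset.sum_filter_add_sum_filter_not Finset.univ (fun s => p s < q s)
          (fun s => |q s - p s|)]
        have h1 : ∑ s ∈ A, |q s - p s| = D := by
          refine Finset.sum_congr rfl fun s hs => ?_
          rw [hAdef] at hs
          simp only [Finset.mem_filter] at hs
          exact abs_of_pos (by linarith [hs.2])
        have h2 : ∑ s ∈ Finset.univ.filter (fun s => ¬ p s < q s), |q s - p s| = D := by
          have : ∑ s ∈ Finset.univ.filter (fun s => ¬ p s < q s), |q s - p s|
              = - ∑ s ∈ Finset.univ.filter (fun s => ¬ p s < q s), (q s - p s) := by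
            rw [← Finset.sum_neg_distrib]
            refine Finset.sum_congr rfl fun s hs => ?_
            simp only [Finset.mem_filter, not_lt] at hs
            rw [abs_of_nonpos (by linarith [hs.2])]
          rw [this]
          linarith
        rw [h1, h2]; ring
      have hD : β / 2 ≤ D := by rw [habs] at hω; linarith
      have hD0 : 0 < D := lt_of_lt_of_le (by linarith) hD
      have hAne : A ≠ ∅ := by
        intro h
        rw [hDdef, h] at hD0
        simp at hD0
      have hAnu : A ≠ Finset.univ := by
        intro h
        rw [hDdef, h, Finset.sum_sub_distrib, hq1, hp1] at hD0
        norm_num at hD0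
      have hA𝒜 : A ∈ 𝒜 := by
        rw [h𝒜def]; simp [hAne, hAnu]
      have hωE : ω ∈ E A := by
        simp only [hEdef, Set.mem_setOf_eq]
        rw [Finset.sum_sub_distrib, Finset.sum_const, Finset.card_univ, Fintype.card_fin,
          nsmul_eq_mul]
        have := hqsum A
        have hsumA : ∑ i, (if X i ω ∈ A then (1:ℝ) else 0) = (n:ℝ) * ∑ s ∈ A, q s := by
          rw [this]
          field_simp
        rw [hsumA]
        have hDeq : ∑ s ∈ A, q s - ∑ s ∈ A, p s = D := by
          rw [hDdef, Finset.sum_sub_distrib]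
        have : (n:ℝ) * β / 2 ≤ (n:ℝ) * D := by
          rw [div_eq_mul_inv, mul_assoc]
          exact mul_le_mul_of_nonneg_left (by linarith) hnR.le
        calc (n:ℝ) * β / 2 ≤ (n:ℝ) * D := this
          _ = (n:ℝ) * ∑ s ∈ A, q s - (n:ℝ) * ∑ s ∈ A, p s := by
              rw [← hDeq]; ring
      exact Set.mem_biUnion hA𝒜 hωE
    -- union bound
    have hstep1 : μ {ω | β ≤ ∑ s, |(n : ℝ)⁻¹ *
        (Finset.univ.filter (fun i => X i ω = s)).card - p s|} ≤ ∑ A ∈ 𝒜, μ (E A) :=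
      le_trans (measure_mono hsub) (measure_biUnion_finset_le 𝒜 E)
    have hfin : ∑ A ∈ 𝒜, μ (E A) ≠ ⊤ :=
      (ENNReal.sum_lt_top.2 fun A _ => measure_lt_top μ (E A)).ne
    calc (μ {ω | β ≤ ∑ s, |(n : ℝ)⁻¹ *
          (Finset.univ.filter (fun i => X i ω = s)).card - p s|}).toReal
        ≤ (∑ A ∈ 𝒜, μ (E A)).toReal := ENNReal.toReal_mono hfin hstep1
      _ = ∑ A ∈ 𝒜, (μ (E A)).toReal :=
          ENNReal.toReal_sum fun A _ => measure_ne_top μ (E A)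
      _ ≤ ∑ _A ∈ 𝒜, Real.exp (-((n : ℝ) * β ^ 2 / 2)) := by
          refine Finset.sum_le_sum fun A _ => ?_
          exact per_set_bound μ p hp0 hp1 n X hmeas hindep hlaw A β hβ.le
      _ = (𝒜.card : ℝ) * Real.exp (-((n : ℝ) * β ^ 2 / 2)) := by
          rw [Finset.sum_const, nsmul_eq_mul]
      _ = C * Real.exp (-((n : ℝ) * β ^ 2 / 2)) := by rw [hcard𝒜]
  have hlogC : 0 < Real.log C := Real.log_pos (by linarith)
  have hlogδ : Real.log δ < 0 := Real.log_neg hδ0 hδ1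
  constructor
  · -- part 1
    set L : ℝ := Real.log C - Real.log δ with hLdef
    have hL : 0 < L := by simp only [hLdef]; linarith
    set β : ℝ := Real.sqrt (2 * L / n) with hβdef
    have harg : 0 < 2 * L / n := by positivity
    have hβ : 0 < β := Real.sqrt_pos.mpr harg
    refine le_trans (master β hβ) ?_
    have hβ2 : β ^ 2 = 2 * L / n := Real.sq_sqrt harg.le
    have hexp : (n:ℝ) * β ^ 2 / 2 = L := by
      rw [hβ2]; field_simp
    rw [hexp, hLdef, neg_sub, Real.exp_sub, Real.exp_log hδ0, Real.exp_log hC0]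
    exact le_of_eq (by field_simp)
  · -- part 2
    intro β hβ hnbig
    refine le_trans (master β hβ) ?_
    have hβ2 : 0 < β ^ 2 := by positivity
    have hkey : Real.log (C / δ) ≤ (n:ℝ) * β ^ 2 / 2 := by
      have h1 := mul_le_mul_of_nonneg_right hnbig hβ2.le
      have h2 : 2 / β ^ 2 * Real.log (C / δ) * β ^ 2 = 2 * Real.log (C / δ) := by
        field_simp
      rw [h2] at h1
      linarith
    have hCδ : 0 < C / δ := by positivity
    calc C * Real.exp (-((n:ℝ) * β ^ 2 / 2))
        ≤ C * Real.exp (-(Real.log (C / δ))) := by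
          refine mul_le_mul_of_nonneg_left (Real.exp_le_exp.mpr (by linarith)) hC0.le
      _ = C * (δ / C) := by
          rw [Real.exp_neg, Real.exp_log hCδ]
          rw [inv_div]
      _ = δ := by field_simp
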